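/- Let p and q be coprime positive integers. Then 2·|S| = (p−1)(q−1), where |S| is the cardinality of S. -/

import Mathlib

open scoped Classical

private lemma dvd_helper {p q x : ℤ} (hx : 0 < x) (hxp : x < p) (hpq : IsCoprime p q)
    (h : p ∣ q * x) : False := by
  have hdx : p ∣ x := hpq.dvd_of_dvd_mul_left h
  have := Int.le_of_dvd hx hdx
  omega

/-- For coprime positive integers `p` and `q`, twice the number of integers `n` with
`1 ≤ n ≤ pq − 1` of the form `n = qx + py` with `0 < x < p`, `0 < y < q` is
`(p−1)(q−1)`. -/
theorem card_S
    (p q : ℤ) (hp : 0 < p) (hq : 0 < q) (hpq : IsCoprime p q) :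
    (2 : ℤ) * ((Finset.Icc (1 : ℤ) (p * q - 1)).filter
        (fun n => ∃ x y : ℤ, 0 < x ∧ x < p ∧ 0 < y ∧ y < q ∧ n = q * x + p * y)).card =
      (p - 1) * (q - 1) := by
  set A : Finset (ℤ × ℤ) := Finset.Ioo (0:ℤ) p ×ˢ Finset.Ioo (0:ℤ) q with hA
  set f : ℤ × ℤ → ℤ := fun z => q * z.1 + p * z.2 with hf
  set A' : Finset (ℤ × ℤ) := A.filter (fun z => f z < p * q) with hA'
  -- injectivity of f on A
  have hinj : Set.InjOn f A := by
    rintro ⟨x₁, y₁⟩ h₁ ⟨x₂, y₂⟩ h₂ h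
    simp only [hA, Finset.coe_product, Set.mem_prod, Finset.mem_coe, Finset.mem_Ioo] at h₁ h₂
    simp only [hf] at h
    have hdvd : p ∣ q * (x₁ - x₂) := ⟨y₂ - y₁, by ring_nf; linarith⟩
    have hdx : p ∣ x₁ - x₂ := hpq.dvd_of_dvd_mul_left hdvd
    obtain ⟨k, hk⟩ := hdx
    have hb1 : x₁ - x₂ < p := by omega
    have hb2 : -p < x₁ - x₂ := by omega
    have hk0 : k = 0 := by
      rcases lt_trichotomy k 0 with h' | h' | h'
      · have : p * k ≤ p * (-1) := by
          apply mul_le_mul_of_nonneg_left (by omega) hp.le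
        omega
      · exact h'
      · have : p * 1 ≤ p * k := by
          apply mul_le_mul_of_nonneg_left (by omega) hp.le
        omega
    rw [hk0, mul_zero] at hk
    have hx : x₁ = x₂ := by omega
    have hy : y₁ = y₂ := by
      have : p * y₁ = p * y₂ := by rw [hx] at h; linarith
      exact mul_left_cancel₀ (by positivity) this
    simp [hx, hy]
  -- the filtered set equals the image of A' under f
  have key : (Finset.Icc (1 : ℤ) (p * q - 1)).filter
        (fun n => ∃ x y : ℤ, 0 < x ∧ x < p ∧ 0 < y ∧ y < q ∧ n = q * x + p * y)
      = A'.image f := by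
    ext n
    simp only [Finset.mem_filter, Finset.mem_Icc, Finset.mem_image, hA', hA, hf,
      Finset.mem_product, Finset.mem_Ioo]
    constructor
    · rintro ⟨⟨h1, h2⟩, x, y, hx1, hx2, hy1, hy2, hn⟩
      exact ⟨(x, y), ⟨⟨⟨hx1, hx2⟩, hy1, hy2⟩, by simp; omega⟩, hn.symm⟩
    · rintro ⟨⟨x, y⟩, ⟨⟨⟨hx1, hx2⟩, hy1, hy2⟩, hlt⟩, hn⟩
      simp only at hlt hn
      refine ⟨⟨?_, by omega⟩, x, y, hx1, hx2, hy1, hy2, hn.symm⟩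
      nlinarith
  rw [key, Finset.card_image_of_injOn (hinj.mono (by
    simp only [hA']; exact_mod_cast Finset.coe_subset.mpr (Finset.filter_subset _ _)))]
  -- f z ≠ p * q for z ∈ A
  have hne : ∀ z ∈ A, f z ≠ p * q := by
    rintro ⟨x, y⟩ hz h
    simp only [hA, Finset.mem_product, Finset.mem_Ioo] at hz
    simp only [hf] at h
    exact dvd_helper hz.1.1 hz.1.2 hpq ⟨q - y, by linarith [h]⟩
  -- bijection between A' and A \ A'
  have hcard : A'.card = (A \ A').card := by
    apply Finset.card_bij' (fun z _ => (p - z.1, q - z.2)) (fun z _ => (p - z.1, q - z.2))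
    · rintro ⟨x, y⟩ hz
      simp only [hA', Finset.mem_filter, hA, Finset.mem_product, Finset.mem_Ioo, hf] at hz
      obtain ⟨⟨⟨hx1, hx2⟩, hy1, hy2⟩, hlt⟩ := hz
      simp only [Finset.mem_sdiff, hA', Finset.mem_filter, hA, Finset.mem_product,
        Finset.mem_Ioo, hf]
      refine ⟨⟨⟨by omega, by omega⟩, by omega, by omega⟩, fun h => ?_⟩
      have := h.2
      try simp only at this
      nlinarith
    · rintro ⟨x, y⟩ hz
      simp only [Finset.mem_sdiff, hA', Finset.mem_filter, hA, Finset.mem_product,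
        Finset.mem_Ioo, hf] at hz
      obtain ⟨⟨⟨hx1, hx2⟩, hy1, hy2⟩, hz2⟩ := hz
      have hge : p * q ≤ q * x + p * y := by
        by_contra h
        exact hz2 ⟨⟨⟨hx1, hx2⟩, hy1, hy2⟩, by omega⟩
      have hne' : q * x + p * y ≠ p * q := hne (x, y) (by
        simp only [hA, Finset.mem_product, Finset.mem_Ioo]; exact ⟨⟨hx1, hx2⟩, hy1, hy2⟩)
      simp only [hA', Finset.mem_filter, hA, Finset.mem_product, Finset.mem_Ioo, hf]
      have hgt : p * q < q * x + p * y := lt_of_le_of_ne hge (Ne.symm hne')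
      refine ⟨⟨⟨by omega, by omega⟩, by omega, by omega⟩, by nlinarith⟩
    · rintro ⟨x, y⟩ _; simp only [Prod.mk.injEq]; omega
    · rintro ⟨x, y⟩ _; simp only [Prod.mk.injEq]; omega
  have hsub : A' ⊆ A := Finset.filter_subset _ _
  have hsplit : (A \ A').card + A'.card = A.card := Finset.card_sdiff_add_card_eq_card hsub
  have hAcard : (A.card : ℤ) = (p - 1) * (q - 1) := by
    simp only [hA, Finset.card_product, Int.card_Ioo]
    push_cast
    rw [Int.toNat_of_nonneg (by omega), Int.toNat_of_nonneg (by omega)]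
    ring
  have h2 : 2 * A'.card = A.card := by omega
  have := congrArg (fun n : ℕ => (n : ℤ)) h2
  push_cast at this
  omega
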